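/- If μ − σ² is an integer κ and a probability distribution (πⱼ) on ℤ satisfies (σ² + j − μ)πⱼ = σ²π_{j−1} for all j ∈ ℤ, then πⱼ = 0 for j < κ and π_{κ+k} = e^{−σ²}(σ²)ᵏ/k! for k ≥ 0; i.e., the unique fixed point of the discrete zero bias transformation when μ − σ² ∈ ℤ is a Poisson(σ²) distribution translated by μ − σ². -/

import Mathlib

/-- When `μ - σ² = κ` is an integer, the unique probability distribution on ℤ fixed by
the discrete zero bias transformation is a Poisson(σ²) distribution translated by `κ`. -/
theorem fixed_point_is_translated_poisson
    (μ σ2 : ℝ) (hσ : 0 < σ2) (κ : ℤ) (hκ : (κ : ℝ) = μ - σ2)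
    (π : ℤ → ℝ) (hpos : ∀ j, 0 ≤ π j) (hsum : HasSum π 1)
    (hrec : ∀ j : ℤ, (σ2 + (j : ℝ) - μ) * π j = σ2 * π (j - 1)) :
    (∀ j : ℤ, j < κ → π j = 0) ∧
    (∀ k : ℕ, π (κ + k) = Real.exp (-σ2) * σ2 ^ k / (Nat.factorial k)) := by
  have hrec' : ∀ j : ℤ, ((j : ℝ) - κ) * π j = σ2 * π (j - 1) := by
    intro j
    have := hrec j
    rw [hκ] at *
    linarith [hrec j]
  -- zero below κ
  have hzero : ∀ n : ℕ, π (κ - 1 - n) = 0 := by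
    intro n
    induction n with
    | zero =>
      have h := hrec' κ
      simp at h
      rcases h with h | h
      · exact absurd h (ne_of_gt hσ)
      · simpa using h
    | succ n ih =>
      have h := hrec' (κ - 1 - n)
      rw [ih, mul_zero] at h
      have : π (κ - 1 - n - 1) = 0 := by
        have h2 := h.symm
        rcases mul_eq_zero.mp h2 with h3 | h3
        · exact absurd h3 (ne_of_gt hσ)
        · exact h3
      have heq : (κ - 1 - (n + 1 : ℕ) : ℤ) = κ - 1 - n - 1 := by push_cast; ring
      rw [heq]
      exact this
  have hlt : ∀ j : ℤ, j < κ → π j = 0 := by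
    intro j hj
    have hn : ∃ n : ℕ, (n : ℤ) = κ - 1 - j := ⟨(κ - 1 - j).toNat, Int.toNat_of_nonneg (by omega)⟩
    obtain ⟨n, hn⟩ := hn
    have : j = κ - 1 - n := by omega
    rw [this]; exact hzero n
  -- formula in terms of π κ
  have hform : ∀ k : ℕ, π (κ + k) = π κ * σ2 ^ k / (Nat.factorial k) := by
    intro k
    induction k with
    | zero => simp
    | succ k ih =>
      have h := hrec' (κ + (k + 1 : ℕ))
      have heq : (κ + (k + 1 : ℕ) - 1 : ℤ) = κ + k := by push_cast; ring
      rw [heq, ih] at h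
      have hc : ((κ + (k + 1 : ℕ) : ℤ) : ℝ) - κ = (k : ℝ) + 1 := by push_cast; ring
      rw [hc] at h
      have hk1 : ((k : ℝ) + 1) ≠ 0 := by positivity
      have hfac : (Nat.factorial (k + 1) : ℝ) = (k + 1) * Nat.factorial k := by
        push_cast [Nat.factorial_succ]; ring
      have hfne : (Nat.factorial k : ℝ) ≠ 0 := Nat.cast_ne_zero.mpr (Nat.factorial_ne_zero k)
      have hx : π (κ + (k + 1 : ℕ)) = σ2 * (π κ * σ2 ^ k / (Nat.factorial k)) / ((k : ℝ) + 1) := by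
        rw [eq_div_iff hk1]
        linarith [h]
      rw [hx, hfac]
      field_simp
      ring
  -- sum computation
  have hinj : Function.Injective (fun k : ℕ => κ + (k : ℤ)) := by
    intro a b h; simpa using h
  have hsupp : ∀ j ∉ Set.range (fun k : ℕ => κ + (k : ℤ)), π j = 0 := by
    intro j hj
    apply hlt
    by_contra h
    push_neg at h
    exact hj ⟨(j - κ).toNat, by simp; omega⟩
  have hsum' : HasSum (fun k : ℕ => π (κ + k)) 1 :=
    (hinj.hasSum_iff hsupp).mpr hsum
  have hExp : HasSum (fun k : ℕ => σ2 ^ k / (Nat.factorial k)) (Real.exp σ2) := by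
    rw [Real.exp_eq_exp_ℝ]
    exact NormedSpace.expSeries_div_hasSum_exp σ2
  have hExp' : HasSum (fun k : ℕ => π κ * σ2 ^ k / (Nat.factorial k)) (π κ * Real.exp σ2) := by
    simpa [mul_div_assoc] using hExp.mul_left (π κ)
  have hsum'' : HasSum (fun k : ℕ => π κ * σ2 ^ k / (Nat.factorial k)) 1 := by
    have : (fun k : ℕ => π (κ + k)) = fun k : ℕ => π κ * σ2 ^ k / (Nat.factorial k) := by
      funext k; exact hform k
    rwa [this] at hsum'
  have hπκ : π κ * Real.exp σ2 = 1 := hExp'.unique hsum''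
  have hπκ' : π κ = Real.exp (-σ2) := by
    rw [Real.exp_neg]
    field_simp
    linarith [hπκ]
  refine ⟨hlt, fun k => ?_⟩
  rw [hform k, hπκ', mul_div_assoc]
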